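/- For any finite set X of positive integers, the Grundy sequence G of the all-but subtraction game with excluded set X is ultimately arithmetic periodic: there exist n₀, p ∈ ℕ with p > 0 and s ∈ ℕ such that for all n ≥ n₀, G(n + p) = G(n) + s. -/

import Mathlib

/-- The minimum excludant of a set of naturals. -/
noncomputable def mex (S : Set ℕ) : ℕ := sInf {m | m ∉ S}

/-- `G` is the Grundy (nim) sequence of the all-but subtraction game with
excluded set `X`: `G n = mex { G (n - t) : t > 0, t ∉ X, t ≤ n }`. -/
def IsGrundy (X : Set ℕ) (G : ℕ → ℕ) : Prop :=
  ∀ n, G n = mex {m | ∃ t, 0 < t ∧ t ∉ X ∧ t ≤ n ∧ G (n - t) = m}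

lemma mex_notMem {S : Set ℕ} (h : ∃ m, m ∉ S) : mex S ∉ S :=
  Nat.sInf_mem (⟨h.choose, h.choose_spec⟩ : Set.Nonempty {m | m ∉ S})

lemma mem_of_lt_mex {S : Set ℕ} {v : ℕ} (h : v < mex S) : v ∈ S := by
  by_contra hv
  exact absurd (Nat.sInf_le hv) (not_le.mpr h)

lemma mex_le_of_subset_Iio {S : Set ℕ} {k : ℕ} (h : S ⊆ Set.Iio k) : mex S ≤ k := by
  by_contra hc
  push_neg at hc
  exact absurd (h (mem_of_lt_mex hc)) (by simp)

lemma mex_eq_of {S : Set ℕ} {g : ℕ} (h1 : g ∉ S) (h2 : ∀ v < g, v ∈ S) : mex S = g := by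
  refine le_antisymm (Nat.sInf_le h1) ?_
  refine le_csInf ⟨g, h1⟩ ?_
  intro m hm
  by_contra h
  push_neg at h
  exact hm (h2 m h)

lemma mex_Iio (k : ℕ) : mex (Set.Iio k) = k :=
  mex_eq_of (by simp) (fun v hv => hv)

/-- values reached strictly below `n` -/
def Vs (G : ℕ → ℕ) (n : ℕ) : Set ℕ := {m | ∃ k, k < n ∧ G k = m}

noncomputable def mu (G : ℕ → ℕ) (n : ℕ) : ℕ := mex (Vs G n)

def Ds (X : Set ℕ) (G : ℕ → ℕ) (n : ℕ) : Set ℕ :=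
  {m | ∃ t, 0 < t ∧ t ∉ X ∧ t ≤ n ∧ G (n - t) = m}

lemma exists_notMem_Vs (G : ℕ → ℕ) (n : ℕ) : ∃ m, m ∉ Vs G n := by
  refine ⟨(Finset.range n).sup G + 1, ?_⟩
  rintro ⟨k, hk, hGk⟩
  have : G k ≤ (Finset.range n).sup G := Finset.le_sup (Finset.mem_range.mpr hk)
  omega

lemma Ds_subset_Vs {X : Set ℕ} {G : ℕ → ℕ} {n : ℕ} : Ds X G n ⊆ Vs G n := by
  rintro m ⟨t, ht0, _, htn, rfl⟩
  exact ⟨n - t, by omega, rfl⟩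

lemma exists_notMem_Ds {X : Set ℕ} {G : ℕ → ℕ} {n : ℕ} : ∃ m, m ∉ Ds X G n := by
  obtain ⟨m, hm⟩ := exists_notMem_Vs G n
  exact ⟨m, fun h => hm (Ds_subset_Vs h)⟩

section

variable {X : Set ℕ} {G : ℕ → ℕ}

lemma hG_Ds (hG : IsGrundy X G) (n : ℕ) : G n = mex (Ds X G n) := hG n

lemma Vs_succ (G : ℕ → ℕ) (n : ℕ) : Vs G (n + 1) = Vs G n ∪ {G n} := by
  ext m
  constructor
  · rintro ⟨k, hk, rfl⟩
    rcases Nat.lt_succ_iff_lt_or_eq.mp hk with h | rfl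
    · exact Or.inl ⟨k, h, rfl⟩
    · exact Or.inr rfl
  · rintro (⟨k, hk, rfl⟩ | hm)
    · exact ⟨k, by omega, rfl⟩
    · exact ⟨n, by omega, hm.symm⟩

lemma Vs_eq (hG : IsGrundy X G) : ∀ n, Vs G n = Set.Iio (mu G n) := by
  intro n
  induction n with
  | zero =>
    have h0 : Vs G 0 = (∅ : Set ℕ) := by
      ext m; simp [Vs]
    have : mu G 0 = 0 := by
      rw [mu, h0]
      exact mex_eq_of (by simp) (by omega)
    rw [h0, this]; ext m; simp
  | succ n ih =>
    have hGle : G n ≤ mu G n := by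
      rw [hG_Ds hG n]
      exact mex_le_of_subset_Iio (by rw [← ih]; exact Ds_subset_Vs)
    rcases lt_or_eq_of_le hGle with hlt | heq
    · have hmem : G n ∈ Vs G n := by rw [ih]; exact hlt
      have hV : Vs G (n + 1) = Vs G n := by
        rw [Vs_succ]
        exact Set.union_eq_self_of_subset_right (Set.singleton_subset_iff.mpr hmem)
      have hmu : mu G (n + 1) = mu G n := by rw [mu, hV]; rfl
      rw [hV, hmu, ih]
    · have hV : Vs G (n + 1) = Set.Iio (mu G n + 1) := by
        rw [Vs_succ, ih, heq]
        ext m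
        simp
      have hmu : mu G (n + 1) = mu G n + 1 := by rw [mu, hV, mex_Iio]
      rw [hV, hmu]

lemma G_le_mu (hG : IsGrundy X G) (n : ℕ) : G n ≤ mu G n := by
  rw [hG_Ds hG n]
  exact mex_le_of_subset_Iio (by rw [← Vs_eq hG]; exact Ds_subset_Vs)

lemma G_lt_mu (hG : IsGrundy X G) {k n : ℕ} (h : k < n) : G k < mu G n := by
  have : G k ∈ Vs G n := ⟨k, h, rfl⟩
  rwa [Vs_eq hG] at this

lemma mu_mono (hG : IsGrundy X G) {a b : ℕ} (h : a ≤ b) : mu G a ≤ mu G b := by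
  refine mex_le_of_subset_Iio ?_
  rw [← Vs_eq hG]
  rintro m ⟨k, hk, rfl⟩
  exact ⟨k, by omega, rfl⟩

lemma mu_succ_of_eq (hG : IsGrundy X G) {n : ℕ} (h : G n = mu G n) :
    mu G (n + 1) = mu G n + 1 := by
  have hV : Vs G (n + 1) = Set.Iio (mu G n + 1) := by
    rw [Vs_succ, Vs_eq hG, h]
    ext m; simp
  rw [mu, hV, mex_Iio]

lemma mu_succ_of_lt (hG : IsGrundy X G) {n : ℕ} (h : G n < mu G n) :
    mu G (n + 1) = mu G n := by
  have hmem : G n ∈ Vs G n := by rw [Vs_eq hG]; exact h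
  have hV : Vs G (n + 1) = Vs G n := by
    rw [Vs_succ]
    exact Set.union_eq_self_of_subset_right (by simpa using hmem)
  rw [mu, hV]; rfl

lemma mu_add_le (hG : IsGrundy X G) (n m : ℕ) : mu G (n + m) ≤ mu G n + m := by
  induction m with
  | zero => simp
  | succ m ih =>
    have h := G_le_mu hG (n + m)
    rcases lt_or_eq_of_le h with hlt | heq
    · rw [← Nat.add_assoc, mu_succ_of_lt hG hlt]; omega
    · rw [← Nat.add_assoc, mu_succ_of_eq hG heq]; omega

lemma mu_window (hG : IsGrundy X G) (n M : ℕ) : mu G n ≤ mu G (n - M) + M := by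
  calc mu G n ≤ mu G ((n - M) + M) := mu_mono hG (by omega)
    _ ≤ mu G (n - M) + M := mu_add_le hG _ _

/-- near-window part of the option set -/
def Bs (X : Set ℕ) (G : ℕ → ℕ) (M n : ℕ) : Set ℕ :=
  {m | ∃ t, 0 < t ∧ t ≤ M ∧ t ∉ X ∧ G (n - t) = m}

lemma decomp (hG : IsGrundy X G) {M n : ℕ} (hX : ∀ x ∈ X, x < M) (hMn : M ≤ n) :
    Ds X G n = Set.Iio (mu G (n - M)) ∪ Bs X G M n := by
  ext m
  constructor
  · rintro ⟨t, ht0, htX, htn, rfl⟩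
    by_cases hle : t ≤ M
    · exact Or.inr ⟨t, ht0, hle, htX, rfl⟩
    · left
      have : G (n - t) ∈ Vs G (n - M) := ⟨n - t, by omega, rfl⟩
      rwa [Vs_eq hG] at this
  · rintro (hm | ⟨t, ht0, htM, htX, rfl⟩)
    · have : m ∈ Vs G (n - M) := by rw [Vs_eq hG]; exact hm
      obtain ⟨k, hk, rfl⟩ := this
      refine ⟨n - k, by omega, ?_, by omega, by rw [show n - (n - k) = k by omega]⟩
      intro hmem
      have := hX _ hmem
      omega
    · exact ⟨t, ht0, htX, by omega, rfl⟩

end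
theorem stmt_1 (X : Finset ℕ) (hpos : ∀ x ∈ X, 0 < x)
    (G : ℕ → ℕ) (hG : IsGrundy (↑X) G) :
    ∃ n₀ p s : ℕ, 0 < p ∧ ∀ n, n₀ ≤ n → G (n + p) = G n + s := by
  classical
  set M : ℕ := X.sup id + 1 with hMdef
  have hM1 : 1 ≤ M := by omega
  have hX : ∀ x ∈ (X : Set ℕ), x < M := by
    intro x hx
    have : id x ≤ X.sup id := Finset.le_sup (by exact_mod_cast hx)
    simp only [id] at this
    omega
  -- bound on the window entries
  have hwb : ∀ n j, 1 ≤ n → 1 ≤ j → G (n - j) + 1 - mu G (n - M) ≤ M := by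
    intro n j hn hj
    have h1 : G (n - j) < mu G n := G_lt_mu hG (by omega)
    have h2 : mu G n ≤ mu G (n - M) + M := mu_window hG n M
    omega
  -- the state function
  set σ : ℕ → (Fin M → Fin (M + 1)) := fun n j =>
    ⟨min M (G (n - (j.1 + 1)) + 1 - mu G (n - M)), by
      have := min_le_left M (G (n - (j.1 + 1)) + 1 - mu G (n - M)); omega⟩ with hσdef
  obtain ⟨a, b, hab, hfab⟩ :=
    Finite.exists_ne_map_eq_of_infinite (fun i : ℕ => σ (2 * M + 2 + i))
  obtain ⟨n₁, n₂, hn₁, hltn, hσeq⟩ :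
      ∃ n₁ n₂, 2 * M + 2 ≤ n₁ ∧ n₁ < n₂ ∧ σ n₁ = σ n₂ := by
    rcases Nat.lt_or_ge a b with h | h
    · exact ⟨2 * M + 2 + a, 2 * M + 2 + b, by omega, by omega, hfab⟩
    · have : b < a := by omega
      exact ⟨2 * M + 2 + b, 2 * M + 2 + a, by omega, by omega, hfab.symm⟩
  set p : ℕ := n₂ - n₁ with hpdef
  have hp : 0 < p := by omega
  have hn₂ : n₂ = n₁ + p := by omega
  set s : ℕ := mu G (n₂ - M) - mu G (n₁ - M) with hsdef
  have hs : mu G (n₂ - M) = mu G (n₁ - M) + s := by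
    have := mu_mono hG (show n₁ - M ≤ n₂ - M by omega)
    omega
  -- window equality from the state equality
  have hwin : ∀ j, 1 ≤ j → j ≤ M →
      G (n₁ + p - j) + 1 - mu G (n₁ + p - M) = G (n₁ - j) + 1 - mu G (n₁ - M) := by
    intro j h1 h2
    have hfn := congrFun hσeq ⟨j - 1, by omega⟩
    have hv := congrArg Fin.val hfn
    simp only [hσdef] at hv
    rw [show j - 1 + 1 = j by omega] at hv
    have b1 := hwb n₁ j (by omega) h1
    have b2 := hwb n₂ j (by omega) h1
    rw [min_eq_right b1, min_eq_right b2] at hv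
    rw [show n₁ + p - j = n₂ - j by omega, show n₁ + p - M = n₂ - M by omega]
    exact hv.symm
  -- the inductive step
  have key : ∀ n, n₁ ≤ n →
      (mu G (n + p - M) = mu G (n - M) + s ∧
        ∀ j, 1 ≤ j → j ≤ M →
          G (n + p - j) + 1 - mu G (n + p - M) = G (n - j) + 1 - mu G (n - M)) →
      G (n + p) = G n + s ∧
      (mu G (n + 1 + p - M) = mu G (n + 1 - M) + s ∧
        ∀ j, 1 ≤ j → j ≤ M →
          G (n + 1 + p - j) + 1 - mu G (n + 1 + p - M) =
            G (n + 1 - j) + 1 - mu G (n + 1 - M)) := by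
    rintro n hn ⟨hmu, hwn⟩
    have hMn : M ≤ n := by omega
    have hd₁ : Ds (↑X) G n = Set.Iio (mu G (n - M)) ∪ Bs (↑X) G M n :=
      decomp hG hX (by omega)
    have hd₂ : Ds (↑X) G (n + p) = Set.Iio (mu G (n + p - M)) ∪ Bs (↑X) G M (n + p) :=
      decomp hG hX (by omega)
    -- matching of the near windows
    have hmatch : ∀ v, mu G (n - M) ≤ v →
        (v ∈ Bs (↑X) G M n ↔ v + s ∈ Bs (↑X) G M (n + p)) := by
      intro v hv
      constructor
      · rintro ⟨t, ht0, htM, htX, hGt⟩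
        have hw := hwn t ht0 htM
        exact ⟨t, ht0, htM, htX, by omega⟩
      · rintro ⟨t, ht0, htM, htX, hGt⟩
        have hw := hwn t ht0 htM
        exact ⟨t, ht0, htM, htX, by omega⟩
    have hgmex : G n = mex (Set.Iio (mu G (n - M)) ∪ Bs (↑X) G M n) := by
      rw [hG_Ds hG n, hd₁]
    have hgnot : G n ∉ Set.Iio (mu G (n - M)) ∪ Bs (↑X) G M n := by
      rw [hgmex, ← hd₁]
      exact mex_notMem exists_notMem_Ds
    have hgmem : ∀ v, v < G n → v ∈ Set.Iio (mu G (n - M)) ∪ Bs (↑X) G M n := by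
      intro v hv
      rw [hgmex] at hv
      exact mem_of_lt_mex hv
    have hgge : mu G (n - M) ≤ G n := by
      by_contra h
      push_neg at h
      exact hgnot (Or.inl h)
    have hGnp : G (n + p) = G n + s := by
      rw [hG_Ds hG (n + p), hd₂]
      refine mex_eq_of ?_ ?_
      · rintro (h | h)
        · simp only [Set.mem_Iio] at h
          omega
        · have := (hmatch (G n) hgge).mpr h
          exact hgnot (Or.inr this)
      · intro v hv
        by_cases hvlt : v < mu G (n + p - M)
        · exact Or.inl hvlt
        · right
          have hvge : mu G (n - M) ≤ v - s := by omega
          have hvB : v - s ∈ Bs (↑X) G M n := by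
            rcases hgmem (v - s) (by omega) with h | h
            · simp only [Set.mem_Iio] at h
              omega
            · exact h
          have := (hmatch _ hvge).mp hvB
          rwa [show v - s + s = v by omega] at this
    refine ⟨hGnp, ?_⟩
    -- the mex increment is the same on both sides
    have hGM1 : G (n - M) ≤ mu G (n - M) := G_le_mu hG _
    have hGM2 : G (n + p - M) ≤ mu G (n + p - M) := G_le_mu hG _
    have hδM := hwn M hM1 le_rfl
    obtain ⟨e, he1, he2⟩ : ∃ e, mu G (n + 1 - M) = mu G (n - M) + e ∧
        mu G (n + 1 + p - M) = mu G (n + p - M) + e := by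
      by_cases hfill : G (n - M) = mu G (n - M)
      · have hfill' : G (n + p - M) = mu G (n + p - M) := by omega
        refine ⟨1, ?_, ?_⟩
        · rw [show n + 1 - M = (n - M) + 1 by omega]
          exact mu_succ_of_eq hG hfill
        · rw [show n + 1 + p - M = (n + p - M) + 1 by omega]
          exact mu_succ_of_eq hG hfill'
      · have hlt1 : G (n - M) < mu G (n - M) := by omega
        have hlt2 : G (n + p - M) < mu G (n + p - M) := by omega
        refine ⟨0, ?_, ?_⟩
        · rw [show n + 1 - M = (n - M) + 1 by omega, mu_succ_of_lt hG hlt1]; omega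
        · rw [show n + 1 + p - M = (n + p - M) + 1 by omega, mu_succ_of_lt hG hlt2]; omega

    refine ⟨by omega, ?_⟩
    intro j hj1 hj2
    by_cases hj : j = 1
    · subst hj
      rw [show n + 1 + p - 1 = n + p by omega, show n + 1 - 1 = n by omega]
      omega
    · rw [show n + 1 + p - j = n + p - (j - 1) by omega,
        show n + 1 - j = n - (j - 1) by omega]
      have hw := hwn (j - 1) (by omega) (by omega)
      omega
  -- iterate the step
  have inv : ∀ d,
      mu G (n₁ + d + p - M) = mu G (n₁ + d - M) + s ∧
        ∀ j, 1 ≤ j → j ≤ M →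
          G (n₁ + d + p - j) + 1 - mu G (n₁ + d + p - M) =
            G (n₁ + d - j) + 1 - mu G (n₁ + d - M) := by
    intro d
    induction d with
    | zero =>
      refine ⟨?_, ?_⟩
      · rw [show n₁ + 0 + p - M = n₂ - M by omega, show n₁ + 0 - M = n₁ - M by omega]
        exact hs
      · intro j hj1 hj2
        rw [show n₁ + 0 + p - j = n₁ + p - j by omega,
          show n₁ + 0 + p - M = n₁ + p - M by omega,
          show n₁ + 0 - j = n₁ - j by omega, show n₁ + 0 - M = n₁ - M by omega]
        exact hwin j hj1 hj2
    | succ d ih =>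
      have h := (key (n₁ + d) (by omega) ih).2
      have e1 : n₁ + (d + 1) = n₁ + d + 1 := by omega
      rw [e1]
      exact h
  refine ⟨n₁, p, s, hp, ?_⟩
  intro n hn
  obtain ⟨d, rfl⟩ : ∃ d, n = n₁ + d := ⟨n - n₁, by omega⟩
  exact (key (n₁ + d) (by omega) (inv d)).1
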